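/- (Multi-direction step dominates single-direction step) Let B = A^{2ℓ−1} be SPD (A SPD, ℓ a half-integer), ω ∈ (0,2), g ∈ ℝⁿ nonzero, and let W ∈ ℝ^{n×m} have full column rank with g in the column space of W. Let a* = (WᵀA^{2ℓ+1}W)⁻¹WᵀA^{2ℓ}g and θ = (gᵀA^{2ℓ}g)/(gᵀA^{2ℓ+1}g). Then ‖g − ωAWa*‖²_{A^{2ℓ−1}} ≤ ‖g − ωθAg‖²_{A^{2ℓ−1}}. -/

import Mathlib

open Matrix

lemma symmDot {N : ℕ} {S : Matrix (Fin N) (Fin N) ℝ} (hS : Sᵀ = S) (x y : Fin N → ℝ) :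
    x ⬝ᵥ (S *ᵥ y) = y ⬝ᵥ (S *ᵥ x) := by
  rw [dotProduct_mulVec, ← mulVec_transpose, hS, dotProduct_comm]

lemma dotMulVecLeft {N M : ℕ} (W : Matrix (Fin N) (Fin M) ℝ) (a : Fin M → ℝ) (w : Fin N → ℝ) :
    (W *ᵥ a) ⬝ᵥ w = a ⬝ᵥ (Wᵀ *ᵥ w) := by
  rw [dotProduct_comm, dotProduct_mulVec, ← mulVec_transpose, dotProduct_comm]

lemma zpow_posDef {N : ℕ} {A : Matrix (Fin N) (Fin N) ℝ} (hA : A.PosDef) (k : ℤ) :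
    (A ^ k).PosDef := by
  have hd : IsUnit A.det := hA.det_pos.ne'.isUnit
  have hherm := hA.isHermitian.zpow (α := ℝ) k
  refine Matrix.PosDef.of_dotProduct_mulVec_pos hherm (fun x hx => ?_)
  have hinj : ∀ (j : ℤ) (y : Fin N → ℝ), y ≠ 0 → A ^ j *ᵥ y ≠ 0 := by
    intro j y hy h0
    apply hy
    have : A ^ (-j) *ᵥ (A ^ j *ᵥ y) = y := by
      rw [mulVec_mulVec, ← zpow_add hd, neg_add_cancel, zpow_zero, one_mulVec]
    rw [h0, mulVec_zero] at this
    exact this.symm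
  have hsymj : ∀ j : ℤ, (A ^ j)ᵀ = A ^ j := fun j => hA.isHermitian.zpow (α := ℝ) j
  rw [star_trivial]
  rcases Int.even_or_odd k with ⟨j, hj⟩ | ⟨j, hj⟩
  · have hy := hinj j x hx
    have : A ^ k *ᵥ x = A ^ j *ᵥ (A ^ j *ᵥ x) := by
      rw [mulVec_mulVec, ← zpow_add hd, hj]
    rw [this, dotProduct_mulVec, ← mulVec_transpose, hsymj]
    have := Matrix.PosDef.one (n := Fin N) (R := ℝ)
    simpa [star_trivial] using this.dotProduct_mulVec_pos hy
  · have hy := hinj j x hx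
    have : A ^ k *ᵥ x = A ^ j *ᵥ (A *ᵥ (A ^ j *ᵥ x)) := by
      rw [mulVec_mulVec, mulVec_mulVec, hj]
      rw [show (2*j+1 : ℤ) = j + 1 + j by ring, zpow_add hd, zpow_add hd, zpow_one]
    rw [this, dotProduct_mulVec, ← mulVec_transpose, hsymj]
    simpa [star_trivial] using hA.dotProduct_mulVec_pos hy

/-- multi-direction step dominates single-direction step:
A SPD, p = 2ℓ, ω ∈ (0,2), g ≠ 0, W of full column rank with g ∈ col(W),
a* = (WᵀA^{2ℓ+1}W)⁻¹WᵀA^{2ℓ}g, θ = (gᵀA^{2ℓ}g)/(gᵀA^{2ℓ+1}g). Then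
‖g − ωAWa*‖²_{A^{2ℓ−1}} ≤ ‖g − ωθAg‖²_{A^{2ℓ−1}}. -/
theorem stmt9 (n m : ℕ) (A : Matrix (Fin n) (Fin n) ℝ) (hA : A.PosDef)
    (p : ℕ) -- p = 2ℓ
    (ω : ℝ) (hω0 : 0 < ω) (hω2 : ω < 2)
    (g : Fin n → ℝ) (hg : g ≠ 0)
    (W : Matrix (Fin n) (Fin m) ℝ)
    (hW : LinearIndependent ℝ (fun j : Fin m => Wᵀ j))
    (hgcol : ∃ c : Fin m → ℝ, W *ᵥ c = g)
    (astar : Fin m → ℝ)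
    (hastar : astar = (Wᵀ * A ^ (p + 1) * W)⁻¹ *ᵥ ((Wᵀ * A ^ p) *ᵥ g))
    (θ : ℝ) (hθ : θ = (g ⬝ᵥ (A ^ p *ᵥ g)) / (g ⬝ᵥ (A ^ (p + 1) *ᵥ g))) :
    (g - ω • (A *ᵥ (W *ᵥ astar))) ⬝ᵥ (A ^ ((p : ℤ) - 1) *ᵥ (g - ω • (A *ᵥ (W *ᵥ astar)))) ≤
      (g - (ω * θ) • (A *ᵥ g)) ⬝ᵥ (A ^ ((p : ℤ) - 1) *ᵥ (g - (ω * θ) • (A *ᵥ g))) := by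
  classical
  obtain ⟨c, hc⟩ := hgcol
  have hd : IsUnit A.det := hA.det_pos.ne'.isUnit
  have hAsym : Aᵀ = A := hA.isHermitian
  set z : Matrix (Fin n) (Fin n) ℝ := A ^ ((p:ℤ) - 1) with hzdef
  have hzsym : zᵀ = z := hA.isHermitian.zpow (α := ℝ) _
  have hzpsd := (zpow_posDef hA ((p:ℤ) - 1)).posSemidef
  have hpsym : (A ^ p)ᵀ = A ^ p := by rw [transpose_pow, hAsym]
  have hp1sym : (A ^ (p+1))ᵀ = A ^ (p+1) := by rw [transpose_pow, hAsym]
  have hp1pd : (A ^ (p+1)).PosDef := by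
    have := zpow_posDef hA ((p : ℤ) + 1)
    rwa [show ((p : ℤ) + 1) = ((p+1 : ℕ) : ℤ) by push_cast; ring, zpow_natCast] at this
  have hzA : z * A = A ^ p := by
    have : A ^ ((p:ℤ) - 1) * A ^ (1:ℤ) = A ^ (p:ℤ) := by
      rw [← zpow_add hd]; norm_num
    simpa only [zpow_one, zpow_natCast] using this
  have hzAg : ∀ y : Fin n → ℝ, z *ᵥ (A *ᵥ y) = A ^ p *ᵥ y := fun y => by
    rw [mulVec_mulVec, hzA]
  have hAleft : ∀ x w : Fin n → ℝ, (A *ᵥ x) ⬝ᵥ w = x ⬝ᵥ (A *ᵥ w) := fun x w => by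
    rw [dotMulVecLeft, hAsym]
  set u : Fin n → ℝ := A *ᵥ (W *ᵥ astar) with hu
  set v : Fin n → ℝ := A *ᵥ g with hv
  set M : Matrix (Fin m) (Fin m) ℝ := Wᵀ * A ^ (p + 1) * W with hMdef
  have hWinj : ∀ x : Fin m → ℝ, W *ᵥ x = 0 → x = 0 := by
    intro x h0
    have hsum : ∑ j, x j • Wᵀ j = W *ᵥ x := by
      funext i
      simp [mulVec, dotProduct, transpose_apply, mul_comm, Finset.sum_apply]
    have := Fintype.linearIndependent_iff.mp hW x (by rw [hsum, h0])
    funext i; exact this i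
  have hMsym : Mᵀ = M := by
    rw [hMdef, transpose_mul, transpose_mul, transpose_transpose, hp1sym, Matrix.mul_assoc]
  have hMmulvec : ∀ x : Fin m → ℝ, M *ᵥ x = Wᵀ *ᵥ (A ^ (p+1) *ᵥ (W *ᵥ x)) := fun x => by
    rw [mulVec_mulVec, mulVec_mulVec, hMdef, Matrix.mul_assoc]
  have hMpd : M.PosDef := by
    refine Matrix.PosDef.of_dotProduct_mulVec_pos hMsym (fun x hx => ?_)
    have hWx : W *ᵥ x ≠ 0 := fun h => hx (hWinj x h)
    rw [star_trivial, hMmulvec, ← dotMulVecLeft]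
    simpa [star_trivial] using hp1pd.dotProduct_mulVec_pos hWx
  have hMd : IsUnit M.det := hMpd.det_pos.ne'.isUnit
  have hnormal : M *ᵥ astar = Wᵀ *ᵥ (A ^ p *ᵥ g) := by
    rw [hastar, mulVec_mulVec, mul_nonsing_inv _ hMd, one_mulVec, ← mulVec_mulVec]
  -- the five bilinear-form identities
  have hΦgv : g ⬝ᵥ (z *ᵥ v) = g ⬝ᵥ (A ^ p *ᵥ g) := by rw [hv, hzAg]
  have hΦvv : v ⬝ᵥ (z *ᵥ v) = g ⬝ᵥ (A ^ (p+1) *ᵥ g) := by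
    rw [hv, hzAg, hAleft, mulVec_mulVec, ← pow_succ']
  have hΦgu : g ⬝ᵥ (z *ᵥ u) = astar ⬝ᵥ (M *ᵥ astar) := by
    rw [hu, hzAg, symmDot hpsym, dotMulVecLeft, ← hnormal]
  have hΦuu : u ⬝ᵥ (z *ᵥ u) = astar ⬝ᵥ (M *ᵥ astar) := by
    rw [hu, hzAg, hAleft, mulVec_mulVec, ← pow_succ', dotMulVecLeft, ← hMmulvec]
  have hΦuv : u ⬝ᵥ (z *ᵥ v) = g ⬝ᵥ (A ^ p *ᵥ g) := by
    rw [hu, hv, hzAg, hAleft, mulVec_mulVec, ← pow_succ', dotMulVecLeft, ← hc, ← hMmulvec,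
      symmDot hMsym, hnormal, ← dotMulVecLeft, hc]
  set t : ℝ := g ⬝ᵥ (A ^ p *ᵥ g) with ht
  set q : ℝ := g ⬝ᵥ (A ^ (p+1) *ᵥ g) with hqdef
  set s : ℝ := astar ⬝ᵥ (M *ᵥ astar) with hs
  have hq : 0 < q := by simpa [star_trivial] using hp1pd.dotProduct_mulVec_pos hg
  have hQ : ∀ x : Fin n → ℝ, 0 ≤ x ⬝ᵥ (z *ᵥ x) := fun x => by
    simpa [star_trivial] using hzpsd.dotProduct_mulVec_nonneg x
  -- Cauchy-Schwarz
  have hquad : ∀ lam : ℝ, 0 ≤ s * (lam * lam) + (-(2*t)) * lam + q := by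
    intro lam
    have h0 := hQ (v - lam • u)
    have hexp : (v - lam • u) ⬝ᵥ (z *ᵥ (v - lam • u)) = s * (lam * lam) + (-(2*t)) * lam + q := by
      simp only [mulVec_sub, mulVec_smul, sub_dotProduct, dotProduct_sub, dotProduct_smul,
        smul_dotProduct, smul_eq_mul]
      rw [symmDot hzsym v u, hΦuv, hΦuu, hΦvv]
      ring
    linarith [hexp ▸ h0]
  have hdis := discrim_le_zero hquad
  rw [discrim] at hdis
  have hCS : t ^ 2 ≤ s * q := by nlinarith [hdis]
  have hθq : θ * q = t := by rw [hθ]; exact div_mul_cancel₀ t hq.ne'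
  have key : θ ^ 2 * q ≤ s := by
    have ht2 : t ^ 2 = (θ ^ 2 * q) * q := by rw [← hθq]; ring
    have h2 : (θ ^ 2 * q) * q ≤ s * q := ht2 ▸ hCS
    exact le_of_mul_le_mul_right h2 hq
  have expand : ∀ (a : ℝ) (w : Fin n → ℝ), (g - a • w) ⬝ᵥ (z *ᵥ (g - a • w)) =
      g ⬝ᵥ (z *ᵥ g) - 2*a*(g ⬝ᵥ (z *ᵥ w)) + a^2*(w ⬝ᵥ (z *ᵥ w)) := by
    intro a w
    simp only [mulVec_sub, mulVec_smul, sub_dotProduct, dotProduct_sub, dotProduct_smul,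
      smul_dotProduct, smul_eq_mul]
    rw [symmDot hzsym w g]
    ring
  rw [expand ω u, expand (ω*θ) v, hΦgu, hΦuu, hΦgv, hΦvv, ← hθq]
  nlinarith [mul_nonneg (mul_nonneg hω0.le (by linarith : (0:ℝ) ≤ 2 - ω))
    (by linarith [key] : (0:ℝ) ≤ s - θ^2*q)]
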